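/- arXiv:1612.02412 — 2 statements merged into one kernel-verified Lean document; each statement's English description precedes it below -/
import Mathlib

section
/- The set S consisting of the six diameters of C whose twelve endpoints are the points with polar angles jπ/6 for j = 0,1,…,11 satisfies diam(S) = π − δ(2) = π/2 + 1. In particular diam(6) ≤ π/2 + 1. -/
open Real MeasureTheory

/-- Arc distance between points on the unit circle, given by their polar angles:
the length of the shorter arc between them. -/
noncomputable def arcDist (p q : ℝ) : ℝ := ⨅ n : ℤ, |p - q + 2 * π * n|

/-- Euclidean length of the chord between the circle points with angles `u` and `v`. -/
noncomputable def chordLen (u v : ℝ) : ℝ := 2 * Real.sin (arcDist u v / 2)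

/-- A pair of angles is a genuine shortcut (chord) if its endpoints are distinct points. -/
def IsShortcut (s : ℝ × ℝ) : Prop := arcDist s.1 s.2 ≠ 0

/-- δ(a) = arcsin(a/2) - a/2. -/
noncomputable def sdelta (a : ℝ) : ℝ := Real.arcsin (a / 2) - a / 2

/-- Cost of a path that starts at `p`, fully traverses the listed chords in order
(travelling along the circle in between), and ends at `q`. -/
noncomputable def walkCost (q : ℝ) : ℝ → List (ℝ × ℝ) → ℝ
  | p, [] => arcDist p q
  | p, e :: L => arcDist p e.1 + chordLen e.1 e.2 + walkCost q e.2 L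

/-- Shortest-path distance from `p` to `q` using the shortcuts of `S`
(each usable in either orientation, and always traversed completely). -/
noncomputable def dS (S : Finset (ℝ × ℝ)) (p q : ℝ) : ℝ :=
  sInf {c | ∃ L : List (ℝ × ℝ), (∀ e ∈ L, e ∈ S ∨ (e.2, e.1) ∈ S) ∧ c = walkCost q p L}

/-- Diameter of the circle augmented with the shortcuts of `S`. -/
noncomputable def diamS (S : Finset (ℝ × ℝ)) : ℝ :=
  sSup {d | ∃ p q : ℝ, d = dS S p q}

/-- diam(k): the optimal diameter achievable with `k` shortcuts. -/
noncomputable def diamK (k : ℕ) : ℝ :=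
  sInf {d | ∃ S : Finset (ℝ × ℝ), S.card = k ∧ (∀ s ∈ S, IsShortcut s) ∧ d = diamS S}

/-- Distance from `p` to `q` when a single shortcut with endpoints `u`, `v` is available. -/
noncomputable def dOne (u v p q : ℝ) : ℝ :=
  min (arcDist p q)
    (min (arcDist p u + chordLen u v + arcDist v q)
      (arcDist p v + chordLen u v + arcDist u q))

/-- Two angles represent the same point of the circle. -/
def SamePoint (p q : ℝ) : Prop := arcDist p q = 0

/-- Two pairs of angles represent the same chord of the circle. -/
def SameChord (s t : ℝ × ℝ) : Prop :=
  (SamePoint s.1 t.1 ∧ SamePoint s.2 t.2) ∨ (SamePoint s.1 t.2 ∧ SamePoint s.2 t.1)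

/-- `p` lies in the deep umbra of the shortcut from `u` to `u + β`
(where `0 < β ≤ π` is the counterclockwise arc spanned by the shortcut):
`p` lies in the inner umbra, and `|p u'| + |s| ≥ d(p, v')` where `u'` is the
endpoint closer to `p` and `v'` the other one. -/
def InDeepUmbra (u β p : ℝ) : Prop :=
  (∃ t : ℝ, sdelta (chordLen u (u + β)) ≤ t ∧ t ≤ β - sdelta (chordLen u (u + β)) ∧
    arcDist p (u + t) = 0) ∧
  (arcDist p u ≤ arcDist p (u + β) →
    arcDist p (u + β) ≤ chordLen p u + chordLen u (u + β)) ∧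
  (arcDist p (u + β) ≤ arcDist p u →
    arcDist p u ≤ chordLen p (u + β) + chordLen u (u + β))

/-- `d` equals δ*_k : for `k ∈ {3,4,5}` this is `δ(a*_k)` where `a*_k + δ(a*_k) = (k-1)π/k`,
and for `k = 6` it is `δ(2) = π/2 - 1`. -/
def dstarSpec (k : ℕ) (d : ℝ) : Prop :=
  (k = 6 ∧ d = sdelta 2) ∨
    (∃ a, a ∈ Set.Icc (0 : ℝ) 2 ∧ a + sdelta a = ((k : ℝ) - 1) * π / k ∧ d = sdelta a)



lemma arcDist_bdd (p q : ℝ) : BddBelow (Set.range fun n : ℤ => |p - q + 2 * π * n|) :=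
  ⟨0, by rintro x ⟨n, rfl⟩; positivity⟩

lemma arcDist_nonneg (p q : ℝ) : 0 ≤ arcDist p q :=
  le_ciInf fun _ => abs_nonneg _

lemma arcDist_le (p q : ℝ) (n : ℤ) : arcDist p q ≤ |p - q + 2 * π * n| :=
  ciInf_le (arcDist_bdd p q) n

lemma arcDist_eq (p q : ℝ) (n : ℤ) (h : |p - q + 2 * π * n| ≤ π) :
    arcDist p q = |p - q + 2 * π * n| := by
  refine le_antisymm (arcDist_le p q n) (le_ciInf fun m => ?_)
  rcases eq_or_ne m n with rfl | hmn
  · exact le_refl _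
  · have hk : (1:ℝ) ≤ |(m:ℝ) - n| := by
      have h0 : m - n ≠ 0 := sub_ne_zero.mpr hmn
      have h1 : (1:ℤ) ≤ |m - n| := Int.one_le_abs h0
      have : ((1:ℤ):ℝ) ≤ ((|m - n| : ℤ) : ℝ) := by exact_mod_cast h1
      push_cast at this
      simpa using this
    have hb : 2 * π ≤ |2 * π * ((m:ℝ) - n)| := by
      rw [abs_mul, abs_of_nonneg (by positivity : (0:ℝ) ≤ 2*π)]
      nlinarith [Real.pi_pos]
    have h2 : |2 * π * ((m:ℝ) - n)| - |p - q + 2 * π * n| ≤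
        |2 * π * ((m:ℝ) - n) + (p - q + 2 * π * n)| := by
      have h' := abs_add_le (2 * π * ((m:ℝ) - n) + (p - q + 2 * π * n)) (-(p - q + 2 * π * n))
      rw [abs_neg] at h'
      have heq : (2 * π * ((m:ℝ) - n) + (p - q + 2 * π * n)) + -(p - q + 2 * π * n)
          = 2 * π * ((m:ℝ) - n) := by ring
      rw [heq] at h'
      linarith
    have key : 2 * π * ((m:ℝ) - n) + (p - q + 2 * π * n) = p - q + 2 * π * m := by
      push_cast; ring
    rw [key] at h2
    linarith

lemma arcDist_exists (p q : ℝ) :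
    ∃ n : ℤ, arcDist p q = |p - q + 2 * π * n| ∧ |p - q + 2 * π * n| ≤ π := by
  set x := p - q with hx
  have hpi := Real.pi_pos
  have h1 : |x / (2*π) - round (x / (2*π))| ≤ 1/2 := abs_sub_round _
  have key : x + 2*π*((-round (x/(2*π)) : ℤ) : ℝ) = 2*π * (x/(2*π) - round (x/(2*π))) := by
    push_cast
    field_simp
    ring
  have hb : |x + 2*π*((-round (x/(2*π)) : ℤ) : ℝ)| ≤ π := by
    rw [key, abs_mul, abs_of_nonneg (by positivity : (0:ℝ) ≤ 2*π)]
    nlinarith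
  exact ⟨_, arcDist_eq p q _ hb, hb⟩

lemma arcDist_le_pi (p q : ℝ) : arcDist p q ≤ π := by
  obtain ⟨n, h1, h2⟩ := arcDist_exists p q
  rw [h1]; exact h2

lemma arcDist_symm (p q : ℝ) : arcDist p q = arcDist q p := by
  obtain ⟨n, h1, h2⟩ := arcDist_exists p q
  have h3 : |q - p + 2 * π * (-n : ℤ)| ≤ π := by
    rw [show q - p + 2 * π * ((-n : ℤ) : ℝ) = -(p - q + 2 * π * n) by push_cast; ring, abs_neg]
    exact h2
  rw [h1, arcDist_eq q p (-n) h3,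
    show q - p + 2 * π * ((-n : ℤ) : ℝ) = -(p - q + 2 * π * n) by push_cast; ring, abs_neg]

lemma arcDist_triangle (a b c : ℝ) : arcDist a c ≤ arcDist a b + arcDist b c := by
  obtain ⟨n1, h1, _⟩ := arcDist_exists a b
  obtain ⟨n2, h2, _⟩ := arcDist_exists b c
  calc arcDist a c ≤ |a - c + 2 * π * (n1 + n2 : ℤ)| := arcDist_le a c _
    _ ≤ |a - b + 2*π*n1| + |b - c + 2*π*n2| := by
        rw [show a - c + 2*π*((n1 + n2 : ℤ) : ℝ) = (a - b + 2*π*n1) + (b - c + 2*π*n2) by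
          push_cast; ring]
        exact abs_add_le _ _
    _ = arcDist a b + arcDist b c := by rw [h1, h2]

lemma arcDist_self (p : ℝ) : arcDist p p = 0 := by
  have := arcDist_eq p p 0 (by simpa using Real.pi_pos.le)
  simpa using this

lemma chordLen_nonneg (u v : ℝ) : 0 ≤ chordLen u v := by
  have h1 := arcDist_nonneg u v
  have h2 := arcDist_le_pi u v
  have := Real.sin_nonneg_of_nonneg_of_le_pi (by linarith : 0 ≤ arcDist u v / 2)
    (by linarith : arcDist u v / 2 ≤ π)
  unfold chordLen; linarith

lemma arcDist_pi_add (u : ℝ) : arcDist u (u + π) = π := by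
  have := arcDist_eq u (u + π) 0 (by simp [abs_of_nonpos, Real.pi_pos.le])
  simp at this
  rw [this]
  simp [abs_of_nonpos, Real.pi_pos.le]

lemma chordLen_diam (u : ℝ) : chordLen u (u + π) = 2 := by
  rw [chordLen, arcDist_pi_add, Real.sin_pi_div_two]; ring


noncomputable abbrev Sdef : Finset (ℝ × ℝ) :=
  (Finset.range 6).image fun j : ℕ => ((j : ℝ) * π / 6, (j : ℝ) * π / 6 + π)

lemma arcDist_eq_zero_of (p q : ℝ) (n : ℤ) (h : p - q + 2 * π * n = 0) : arcDist p q = 0 := by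
  refine le_antisymm ?_ (arcDist_nonneg p q)
  have := arcDist_le p q n
  rw [h] at this
  simpa using this

lemma chordLen_diam' (u : ℝ) : chordLen (u + π) u = 2 := by
  rw [chordLen, arcDist_symm, arcDist_pi_add, Real.sin_pi_div_two]; ring

lemma mem_struct (e : ℝ × ℝ) (he : e ∈ Sdef ∨ (e.2, e.1) ∈ Sdef) :
    chordLen e.1 e.2 = 2 ∧ arcDist e.1 e.2 = π := by
  rcases he with he | he
  · obtain ⟨j, _, hj⟩ := Finset.mem_image.mp he
    rw [← hj]
    exact ⟨chordLen_diam _, arcDist_pi_add _⟩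
  · obtain ⟨j, _, hj⟩ := Finset.mem_image.mp he
    obtain ⟨h1, h2⟩ := Prod.mk.inj hj
    rw [← h1, ← h2]
    exact ⟨chordLen_diam' _, by rw [arcDist_symm]; exact arcDist_pi_add _⟩

lemma walkCost_nonneg (q : ℝ) : ∀ (p : ℝ) (L : List (ℝ × ℝ)), 0 ≤ walkCost q p L
  | p, [] => arcDist_nonneg p q
  | p, e :: L => by
      have h1 := arcDist_nonneg p e.1
      have h2 := chordLen_nonneg e.1 e.2
      have h3 := walkCost_nonneg q e.2 L
      show 0 ≤ arcDist p e.1 + chordLen e.1 e.2 + walkCost q e.2 L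
      linarith

lemma dS_bddBelow (S : Finset (ℝ × ℝ)) (p q : ℝ) :
    BddBelow {c | ∃ L : List (ℝ × ℝ), (∀ e ∈ L, e ∈ S ∨ (e.2, e.1) ∈ S) ∧ c = walkCost q p L} :=
  ⟨0, by rintro c ⟨L, _, rfl⟩; exact walkCost_nonneg q p L⟩

lemma dS_nonneg (S : Finset (ℝ × ℝ)) (p q : ℝ) : 0 ≤ dS S p q := by
  apply Real.sInf_nonneg
  rintro c ⟨L, _, rfl⟩
  exact walkCost_nonneg q p L

lemma dS_le_arc (S : Finset (ℝ × ℝ)) (p q : ℝ) : dS S p q ≤ arcDist p q :=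
  csInf_le (dS_bddBelow S p q) ⟨[], by simp, rfl⟩

lemma diam_walk (m : ℤ) : ∃ e : ℝ × ℝ, (e ∈ Sdef ∨ (e.2, e.1) ∈ Sdef) ∧
    arcDist e.1 ((m : ℝ) * π / 6) = 0 ∧ arcDist e.2 ((m : ℝ) * π / 6 + π) = 0 := by
  set j : ℕ := (m % 12).toNat with hjdef
  have hj : (j : ℤ) = m % 12 := Int.toNat_of_nonneg (Int.emod_nonneg m (by norm_num))
  have hj12 : (j : ℤ) < 12 := by rw [hj]; exact Int.emod_lt_of_pos m (by norm_num)
  have hkey : (m : ℝ) - (j : ℝ) = 12 * ((m / 12 : ℤ) : ℝ) := by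
    have : (j : ℤ) = m - 12 * (m / 12) := by omega
    have := congrArg (fun z : ℤ => (z : ℝ)) this
    push_cast at this
    linarith
  set k : ℤ := m / 12
  rcases lt_or_ge (j : ℤ) 6 with hj6 | hj6
  · refine ⟨((j : ℝ) * π / 6, (j : ℝ) * π / 6 + π), Or.inl ?_, ?_, ?_⟩
    · exact Finset.mem_image.mpr ⟨j, Finset.mem_range.mpr (by exact_mod_cast hj6), rfl⟩
    · show arcDist ((j : ℝ) * π / 6) ((m : ℝ) * π / 6) = 0
      exact arcDist_eq_zero_of _ _ k (by linear_combination (-(π/6)) * hkey)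
    · show arcDist ((j : ℝ) * π / 6 + π) ((m : ℝ) * π / 6 + π) = 0
      exact arcDist_eq_zero_of _ _ k (by linear_combination (-(π/6)) * hkey)
  · have hj6' : 6 ≤ j := by exact_mod_cast hj6
    have hj12' : j < 12 := by exact_mod_cast hj12
    set i : ℕ := j - 6 with hidef
    have hi : (i : ℝ) = (j : ℝ) - 6 := by
      have h6 : (i : ℤ) = (j : ℤ) - 6 := by rw [hidef]; omega
      exact_mod_cast h6
    refine ⟨((i : ℝ) * π / 6 + π, (i : ℝ) * π / 6), Or.inr ?_, ?_, ?_⟩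
    · show ((i : ℝ) * π / 6, (i : ℝ) * π / 6 + π) ∈ Sdef
      exact Finset.mem_image.mpr ⟨i, Finset.mem_range.mpr (by omega), rfl⟩
    · show arcDist ((i : ℝ) * π / 6 + π) ((m : ℝ) * π / 6) = 0
      refine arcDist_eq_zero_of _ _ k ?_
      rw [hi]; linear_combination (-(π/6)) * hkey
    · show arcDist ((i : ℝ) * π / 6) ((m : ℝ) * π / 6 + π) = 0
      refine arcDist_eq_zero_of _ _ (k + 1) ?_
      rw [hi]; push_cast; linear_combination (-(π/6)) * hkey

lemma dS_le_via (p q : ℝ) (m : ℤ) :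
    dS Sdef p q ≤ arcDist p ((m : ℝ) * π / 6) + 2 + arcDist ((m : ℝ) * π / 6 + π) q := by
  obtain ⟨e, he, h1, h2⟩ := diam_walk m
  obtain ⟨hc, _⟩ := mem_struct e he
  have hmem : walkCost q p [e] ∈
      {c | ∃ L : List (ℝ × ℝ), (∀ e' ∈ L, e' ∈ Sdef ∨ (e'.2, e'.1) ∈ Sdef) ∧
        c = walkCost q p L} := ⟨[e], by simpa using he, rfl⟩
  have hle : dS Sdef p q ≤ walkCost q p [e] := csInf_le (dS_bddBelow _ p q) hmem
  have hcost : walkCost q p [e] = arcDist p e.1 + 2 + arcDist e.2 q := by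
    show arcDist p e.1 + chordLen e.1 e.2 + arcDist e.2 q = _
    rw [hc]
  have t1 : arcDist p e.1 ≤ arcDist p ((m : ℝ) * π / 6) := by
    have := arcDist_triangle p ((m : ℝ) * π / 6) e.1
    rw [arcDist_symm ((m : ℝ) * π / 6) e.1, h1] at this
    linarith
  have t2 : arcDist e.2 q ≤ arcDist ((m : ℝ) * π / 6 + π) q := by
    have := arcDist_triangle e.2 ((m : ℝ) * π / 6 + π) q
    rw [h2] at this
    linarith
  linarith [hle, hcost.le, hcost.ge]

lemma arith_min (x εa εb D : ℝ) (h1 : x ≤ εa + 2 + (π + εa - D))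
    (h2 : x ≤ εb + 2 + |π - εb - D|) (hD1 : π / 2 + 1 < D) (hD2 : D ≤ π)
    (hsum : εa + εb = π / 6) : x ≤ π / 2 + 1 := by
  have hpi := Real.pi_gt_three
  rcases le_or_gt (π - εb - D) 0 with h | h
  · rw [abs_of_nonpos h] at h2
    linarith
  · rw [abs_of_pos h] at h2
    linarith

lemma dS_le_main (p q : ℝ) : dS Sdef p q ≤ π / 2 + 1 := by
  have hpi := Real.pi_gt_three
  have hpipos := Real.pi_pos
  set n : ℤ := round ((q - p) / (2 * π)) with hndef
  set s : ℝ := q - p - 2 * π * n with hsdef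
  have hs : |s| ≤ π := by
    have h1 : |(q - p) / (2 * π) - n| ≤ 1 / 2 := abs_sub_round _
    have key : s = 2 * π * ((q - p) / (2 * π) - n) := by
      rw [hsdef]; field_simp
    rw [key, abs_mul, abs_of_nonneg (by positivity : (0:ℝ) ≤ 2 * π)]
    nlinarith
  rcases le_or_gt |s| (π / 2 + 1) with hcase | hcase
  · refine le_trans (dS_le_arc Sdef p q) (le_trans (arcDist_le p q n) ?_)
    rw [show p - q + 2 * π * (n : ℝ) = -s by rw [hsdef]; ring, abs_neg]
    exact hcase
  · -- grid points around p
    set m : ℤ := ⌈p * 6 / π⌉ with hmdef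
    have hm1 : p * 6 / π ≤ (m : ℝ) := Int.le_ceil _
    have hm2 : (m : ℝ) < p * 6 / π + 1 := Int.ceil_lt_add_one _
    set ε₂ : ℝ := (m : ℝ) * π / 6 - p with he2def
    have he2a : 0 ≤ ε₂ := by
      rw [he2def]
      rw [div_le_iff₀ hpipos] at hm1
      linarith
    have he2b : ε₂ < π / 6 := by
      have hm2' : (m : ℝ) - 1 < p * 6 / π := by linarith
      rw [lt_div_iff₀ hpipos] at hm2'
      rw [he2def]
      linarith
    set ε₁ : ℝ := π / 6 - ε₂ with he1def
    have hu1 : ((m - 1 : ℤ) : ℝ) * π / 6 = p - ε₁ := by push_cast; rw [he1def, he2def]; ring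
    have hu2 : (m : ℝ) * π / 6 = p + ε₂ := by rw [he2def]; ring
    have harc1 : arcDist p (((m - 1 : ℤ) : ℝ) * π / 6) ≤ ε₁ := by
      refine le_trans (arcDist_le _ _ 0) ?_
      rw [hu1]
      simp [abs_of_nonneg, he2b.le]
      rw [abs_of_nonneg (by rw [he1def]; linarith)]
    have harc2 : arcDist p ((m : ℝ) * π / 6) ≤ ε₂ := by
      refine le_trans (arcDist_le _ _ 0) ?_
      rw [hu2]
      rw [show p - (p + ε₂) + 2 * π * ((0:ℤ):ℝ) = -ε₂ by push_cast; ring, abs_neg,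
        abs_of_nonneg he2a]
    rcases lt_or_ge 0 s with hspos | hsneg
    · -- q = p + s mod 2π, D := s
      have hD1 : π / 2 + 1 < s := by rwa [abs_of_pos hspos] at hcase
      have hD2 : s ≤ π := by rwa [abs_of_pos hspos] at hs
      have bB : dS Sdef p q ≤ ε₁ + 2 + |π - ε₁ - s| := by
        refine le_trans (dS_le_via p q (m - 1)) ?_
        have : arcDist (((m - 1 : ℤ) : ℝ) * π / 6 + π) q ≤ |π - ε₁ - s| := by
          refine le_trans (arcDist_le _ _ n) ?_
          rw [hu1, show p - ε₁ + π - q + 2 * π * (n : ℝ) = π - ε₁ - s by rw [hsdef]; ring]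
        linarith
      have bA : dS Sdef p q ≤ ε₂ + 2 + (π + ε₂ - s) := by
        refine le_trans (dS_le_via p q m) ?_
        have : arcDist ((m : ℝ) * π / 6 + π) q ≤ π + ε₂ - s := by
          refine le_trans (arcDist_le _ _ n) ?_
          rw [hu2, show p + ε₂ + π - q + 2 * π * (n : ℝ) = π + ε₂ - s by rw [hsdef]; ring,
            abs_of_nonneg (by linarith)]
        linarith
      exact arith_min _ ε₂ ε₁ s bA bB hD1 hD2 (by rw [he1def]; ring)
    · -- q = p - d mod 2π, D := -s
      have hD1 : π / 2 + 1 < -s := by rwa [abs_of_nonpos (by linarith)] at hcase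
      have hD2 : -s ≤ π := by rwa [abs_of_nonpos (by linarith)] at hs
      have bB : dS Sdef p q ≤ ε₂ + 2 + |π - ε₂ - (-s)| := by
        refine le_trans (dS_le_via p q m) ?_
        have : arcDist ((m : ℝ) * π / 6 + π) q ≤ |π - ε₂ - (-s)| := by
          refine le_trans (arcDist_le _ _ (n - 1)) ?_
          rw [hu2, show p + ε₂ + π - q + 2 * π * ((n - 1 : ℤ) : ℝ) = -(π - ε₂ - (-s)) by
            rw [hsdef]; push_cast; ring, abs_neg]
        linarith
      have bA : dS Sdef p q ≤ ε₁ + 2 + (π + ε₁ - (-s)) := by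
        refine le_trans (dS_le_via p q (m - 1)) ?_
        have hpos : (0:ℝ) ≤ π + ε₁ - (-s) := by
          have h1 : (0:ℝ) ≤ ε₁ := by rw [he1def]; linarith
          linarith
        have : arcDist (((m - 1 : ℤ) : ℝ) * π / 6 + π) q ≤ π + ε₁ - (-s) := by
          refine le_trans (arcDist_le _ _ (n - 1)) ?_
          rw [hu1, show p - ε₁ + π - q + 2 * π * ((n - 1 : ℤ) : ℝ) = -(π + ε₁ - (-s)) by
            rw [hsdef]; push_cast; ring, abs_neg, abs_of_nonneg hpos]
        linarith
      exact arith_min _ ε₁ ε₂ (-s) bA bB hD1 hD2 (by rw [he1def]; ring)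

lemma arc_q : arcDist 0 (π / 2 + 1) = π / 2 + 1 := by
  have hpi := Real.pi_gt_three
  have h := arcDist_eq 0 (π / 2 + 1) 0 (by
    rw [show (0:ℝ) - (π / 2 + 1) + 2 * π * ((0:ℤ):ℝ) = -(π / 2 + 1) by push_cast; ring, abs_neg,
      abs_of_nonneg (by linarith)]
    linarith)
  rw [h, show (0:ℝ) - (π / 2 + 1) + 2 * π * ((0:ℤ):ℝ) = -(π / 2 + 1) by push_cast; ring, abs_neg,
    abs_of_nonneg (by linarith)]

lemma dS_lower : π / 2 + 1 ≤ dS Sdef 0 (π / 2 + 1) := by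
  have hpi := Real.pi_gt_three
  have hpi4 := Real.pi_le_four
  refine le_csInf ⟨arcDist 0 (π / 2 + 1), ⟨[], by simp, rfl⟩⟩ ?_
  rintro c ⟨L, hL, rfl⟩
  match L with
  | [] =>
    show _ ≤ arcDist 0 (π / 2 + 1)
    rw [arc_q]
  | [e] =>
    obtain ⟨hc, hd⟩ := mem_struct e (hL e (by simp))
    show _ ≤ arcDist 0 e.1 + chordLen e.1 e.2 + walkCost (π / 2 + 1) e.2 []
    have hw : walkCost (π / 2 + 1) e.2 [] = arcDist e.2 (π / 2 + 1) := rfl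
    have tri : arcDist e.1 e.2 ≤ arcDist e.1 0 + arcDist 0 (π / 2 + 1)
        + arcDist (π / 2 + 1) e.2 := by
      have t1 := arcDist_triangle e.1 0 e.2
      have t2 := arcDist_triangle 0 (π / 2 + 1) e.2
      linarith
    rw [hd, arc_q, arcDist_symm e.1 0, arcDist_symm (π / 2 + 1) e.2] at tri
    rw [hw, hc]
    linarith
  | e1 :: e2 :: L' =>
    obtain ⟨hc1, _⟩ := mem_struct e1 (hL e1 (by simp))
    obtain ⟨hc2, _⟩ := mem_struct e2 (hL e2 (by simp))
    show _ ≤ arcDist 0 e1.1 + chordLen e1.1 e1.2 +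
      (arcDist e1.2 e2.1 + chordLen e2.1 e2.2 + walkCost (π / 2 + 1) e2.2 L')
    have h1 := arcDist_nonneg 0 e1.1
    have h2 := arcDist_nonneg e1.2 e2.1
    have h3 := walkCost_nonneg (π / 2 + 1) e2.2 L'
    rw [hc1, hc2]
    linarith

lemma diamS_main : diamS Sdef = π / 2 + 1 := by
  have hub : ∀ d ∈ {d | ∃ p q : ℝ, d = dS Sdef p q}, d ≤ π / 2 + 1 := by
    rintro d ⟨p, q, rfl⟩; exact dS_le_main p q
  refine le_antisymm (Real.sSup_le hub (by positivity)) ?_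
  refine le_trans dS_lower (le_csSup ⟨π / 2 + 1, hub⟩ ⟨0, π / 2 + 1, rfl⟩)

lemma sdelta_two : π - sdelta 2 = π / 2 + 1 := by
  rw [sdelta, show (2:ℝ)/2 = 1 by norm_num, Real.arcsin_one]; ring

lemma card_Sdef : Sdef.card = 6 := by
  rw [Finset.card_image_of_injOn, Finset.card_range]
  intro i _ j _ h
  have h1 : (i : ℝ) * π / 6 = (j : ℝ) * π / 6 := congrArg Prod.fst h
  have hpi := Real.pi_pos
  field_simp at h1
  exact_mod_cast h1

lemma shortcut_Sdef : ∀ s ∈ Sdef, IsShortcut s := by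
  intro s hs
  obtain ⟨j, _, hj⟩ := Finset.mem_image.mp hs
  rw [← hj]
  show arcDist _ _ ≠ 0
  rw [arcDist_pi_add]
  exact Real.pi_ne_zero

lemma diamK_le : diamK 6 ≤ π / 2 + 1 := by
  have hmem : diamS Sdef ∈ {d | ∃ S : Finset (ℝ × ℝ), S.card = 6 ∧
      (∀ s ∈ S, IsShortcut s) ∧ d = diamS S} := ⟨Sdef, card_Sdef, shortcut_Sdef, rfl⟩
  have hbdd : BddBelow {d | ∃ S : Finset (ℝ × ℝ), S.card = 6 ∧
      (∀ s ∈ S, IsShortcut s) ∧ d = diamS S} := by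
    refine ⟨0, ?_⟩
    rintro d ⟨S, _, _, rfl⟩
    apply Real.sSup_nonneg
    rintro x ⟨p, q, rfl⟩
    exact dS_nonneg S p q
  have := csInf_le hbdd hmem
  rw [diamS_main] at this
  exact this


/-- the six diameters of the circle with endpoints at angles `jπ/6`,
`j = 0,…,11`, achieve diameter `π - δ(2) = π/2 + 1`; in particular `diam(6) ≤ π/2 + 1`. -/
theorem stmt3 :
    diamS ((Finset.range 6).image fun j : ℕ => ((j : ℝ) * π / 6, (j : ℝ) * π / 6 + π))
        = π - sdelta 2 ∧
    π - sdelta 2 = π / 2 + 1 ∧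
    diamK 6 ≤ π / 2 + 1 := by
  refine ⟨?_, sdelta_two, diamK_le⟩
  rw [sdelta_two]
  exact diamS_main
end

section
/- The deep umbra Û(s) of any shortcut s is non-empty and has arc length at least |s| − 4·δ(δ(|s|)) > |s| − 0.02. More precisely, the arc from u + α(δ(|s|)) to v − α(δ(|s|)) is non-empty, is contained in Û(s), and has length α(|s|) − 2α(δ(|s|)) = |s| − 4δ(δ(|s|)); moreover the function x ↦ δ(δ(x)) is increasing on [0,2] and δ(δ(2)) < 0.005. -/
open Real MeasureTheory

section AuxLemmas
open Set


lemma arcDist_eq_abs {x y : ℝ} (h : |x - y| ≤ π) : arcDist x y = |x - y| := by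
  have hπ := Real.pi_pos
  have hbdd : BddBelow (Set.range fun n : ℤ => |x - y + 2 * π * n|) := by
    refine ⟨0, ?_⟩; rintro r ⟨n, rfl⟩; exact abs_nonneg _
  apply le_antisymm
  · have h0 : arcDist x y ≤ |x - y + 2 * π * (0:ℤ)| := ciInf_le hbdd 0
    simpa using h0
  · apply le_ciInf
    intro n
    rcases eq_or_ne n 0 with rfl | hn
    · simp
    · have h1 : (1:ℝ) ≤ |(n:ℝ)| := by
        have : (1:ℤ) ≤ |n| := Int.one_le_abs hn
        calc (1:ℝ) = ((1:ℤ):ℝ) := by norm_num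
        _ ≤ ((|n|:ℤ):ℝ) := by exact_mod_cast this
        _ = |(n:ℝ)| := by push_cast; ring
      have h2 : |2*π*n| - |-(x-y)| ≤ |2*π*n - (-(x-y))| := abs_sub_abs_le_abs_sub _ _
      have h3 : |2*π*(n:ℝ)| = 2*π*|(n:ℝ)| := by
        rw [abs_mul]; rw [abs_of_pos (by linarith : (0:ℝ) < 2*π)]
      have h4 : 2*π*(1:ℝ) ≤ 2*π*|(n:ℝ)| := by nlinarith
      rw [abs_neg, h3] at h2
      have : 2*π*n - (-(x-y)) = x - y + 2*π*n := by ring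
      rw [this] at h2
      linarith



lemma pi_half_gt : (1.5:ℝ) < π/2 := by
  have := Real.pi_gt_d6; linarith

lemma sdelta_nonneg {x : ℝ} (h0 : 0 ≤ x) (h2 : x ≤ 2) : 0 ≤ sdelta x := by
  have hp := pi_half_gt
  have h : x/2 ≤ Real.arcsin (x/2) := by
    rw [Real.le_arcsin_iff_sin_le' ⟨by linarith, by linarith⟩]
    exact Real.sin_le (by linarith)
  unfold sdelta; linarith

lemma arcsin_le_lin {y : ℝ} (h0 : 0 ≤ y) (h1 : y ≤ 1) : Real.arcsin y ≤ π/2 * y := by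
  have hs : Real.sin (Real.arcsin y) = y := Real.sin_arcsin (by linarith) h1
  have hm := Real.mul_le_sin (x := Real.arcsin y) (Real.arcsin_nonneg.2 h0)
    (Real.arcsin_le_pi_div_two y)
  rw [hs] at hm
  have hπ := Real.pi_pos
  rw [div_mul_eq_mul_div, div_le_iff₀ hπ] at hm
  linarith [hm]

lemma sdelta_le_lin {x : ℝ} (h0 : 0 ≤ x) (h2 : x ≤ 2) : sdelta x ≤ (π/2 - 1)/2 * x := by
  have := arcsin_le_lin (y := x/2) (by linarith) (by linarith)
  unfold sdelta; linarith

lemma sdelta_le_two {x : ℝ} (h0 : 0 ≤ x) (h2 : x ≤ 2) : sdelta x ≤ 2 := by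
  have h := sdelta_le_lin h0 h2
  have := Real.pi_lt_d2
  nlinarith

lemma sdelta_strictMono : StrictMonoOn sdelta (Icc (0:ℝ) 2) := by
  apply strictMonoOn_of_deriv_pos (convex_Icc 0 2)
  · have : Continuous sdelta := by
      unfold sdelta; continuity
    exact this.continuousOn
  · intro x hx
    rw [interior_Icc] at hx
    obtain ⟨hx0, hx2⟩ := hx
    have hne1 : x/2 ≠ -1 := by intro h; linarith [h]
    have hne2 : x/2 ≠ 1 := by intro h; linarith [h]
    have h1 : HasDerivAt (fun y : ℝ => y/2) (1/2) x := by
      simpa using (hasDerivAt_id x).div_const 2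
    have h2 : HasDerivAt (fun y : ℝ => Real.arcsin (y/2))
        (1 / Real.sqrt (1 - (x/2)^2) * (1/2)) x :=
      by have := (Real.hasDerivAt_arcsin hne1 hne2).comp x h1; exact this
    have hd : HasDerivAt sdelta (1 / Real.sqrt (1 - (x/2)^2) * (1/2) - 1/2) x := by
      unfold sdelta; exact h2.sub h1
    rw [hd.deriv]
    have hlt : 1 - (x/2)^2 < 1 := by nlinarith
    have hgt : 0 < 1 - (x/2)^2 := by nlinarith
    have hs0 : 0 < Real.sqrt (1 - (x/2)^2) := Real.sqrt_pos.2 hgt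
    have hs1 : Real.sqrt (1 - (x/2)^2) < 1 := by
      calc Real.sqrt (1 - (x/2)^2) < Real.sqrt 1 := Real.sqrt_lt_sqrt (by linarith) hlt
      _ = 1 := Real.sqrt_one
    have : 1 < 1 / Real.sqrt (1 - (x/2)^2) := (one_lt_div hs0).2 hs1
    linarith

lemma sdd_strictMono : StrictMonoOn (fun x => sdelta (sdelta x)) (Icc (0:ℝ) 2) := by
  have hmaps : MapsTo sdelta (Icc (0:ℝ) 2) (Icc (0:ℝ) 2) := by
    intro x hx
    exact ⟨sdelta_nonneg hx.1 hx.2, sdelta_le_two hx.1 hx.2⟩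
  exact sdelta_strictMono.comp sdelta_strictMono hmaps

lemma sdelta_two_eq : sdelta 2 = π/2 - 1 := by
  unfold sdelta; norm_num [Real.arcsin_one]

lemma sdd_two_lt : sdelta (sdelta 2) < 0.005 := by
  rw [sdelta_two_eq]
  unfold sdelta
  have hπl := Real.pi_gt_d6
  have hπu := Real.pi_lt_d2
  obtain ⟨y, hy⟩ : ∃ y:ℝ, y = (π/2 - 1)/2 := ⟨_, rfl⟩
  obtain ⟨c, hc⟩ : ∃ c:ℝ, c = y + 0.005 := ⟨_, rfl⟩
  rw [← hy]
  have hy0 : 0 < y := by rw [hy]; linarith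
  have hyu : y < 0.2875 := by rw [hy]; linarith
  have hc0 : 0 < c := by linarith
  have hcu : c < 0.2925 := by linarith
  have hc1 : |c| ≤ 1 := by rw [abs_of_pos hc0]; linarith
  have hsin := Real.sin_bound hc1
  rw [abs_of_pos hc0] at hsin
  have hb := (abs_le.1 hsin).1
  have h3 : c^3 < (0.2925:ℝ)^3 := by exact pow_lt_pow_left₀ hcu hc0.le (by norm_num)
  have h4 : c^4 < (0.2925:ℝ)^4 := by exact pow_lt_pow_left₀ hcu hc0.le (by norm_num)
  have h1 : y < Real.sin c := by nlinarith [h3, h4]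
  have h2 : Real.arcsin y < Real.arcsin (Real.sin c) :=
    Real.strictMonoOn_arcsin ⟨by linarith, by linarith⟩
      ⟨Real.neg_one_le_sin c, Real.sin_le_one c⟩ h1
  rw [Real.arcsin_sin (by linarith) (by linarith)] at h2
  linarith

end AuxLemmas

/-- the deep umbra is almost all of the inner umbra. Let the shortcut span
the counterclockwise arc from `u` to `v = u + β` with `0 < β ≤ π`, let `a` be its chord
length and `A = α(δ(a)) = 2·arcsin(δ(a)/2)`. Then the arc from `u + A` to `v - A` is
non-empty, is contained in the deep umbra, and has length
`α(a) - 2α(δ(a)) = a - 4δ(δ(a)) > a - 0.02`; moreover `x ↦ δ(δ(x))` is increasing on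
`[0,2]` and `δ(δ(2)) < 0.005`. -/
theorem stmt12 (u β a A : ℝ) (hβ : 0 < β) (hβπ : β ≤ π)
    (ha : a = chordLen u (u + β)) (hA : A = 2 * Real.arcsin (sdelta a / 2)) :
    A < β - A ∧
    (∀ t : ℝ, A ≤ t → t ≤ β - A → InDeepUmbra u β (u + t)) ∧
    (β - A) - A = a - 4 * sdelta (sdelta a) ∧
    a - 4 * sdelta (sdelta a) > a - 0.02 ∧
    StrictMonoOn (fun x => sdelta (sdelta x)) (Set.Icc (0 : ℝ) 2) ∧
    sdelta (sdelta 2) < 0.005 := by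
  have hπ := Real.pi_pos
  have hπu := Real.pi_lt_d2
  have hd : arcDist u (u + β) = β := by
    have he : |u - (u + β)| = β := by
      rw [show u - (u + β) = -β by ring, abs_neg, abs_of_nonneg hβ.le]
    rw [arcDist_eq_abs (by rw [he]; exact hβπ), he]
  have ha2 : a = 2 * Real.sin (β / 2) := by
    rw [ha]; unfold chordLen; rw [hd]
  have hs0 : 0 < Real.sin (β / 2) :=
    Real.sin_pos_of_pos_of_lt_pi (by linarith) (by linarith)
  have hs1 : Real.sin (β / 2) ≤ 1 := Real.sin_le_one _
  have ha0 : 0 < a := by rw [ha2]; linarith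
  have ha2' : a ≤ 2 := by rw [ha2]; linarith
  have harc : Real.arcsin (a / 2) = β / 2 := by
    rw [ha2, show 2 * Real.sin (β / 2) / 2 = Real.sin (β / 2) by ring]
    exact Real.arcsin_sin (by linarith) (by linarith)
  have hβeq : β = a + 2 * sdelta a := by unfold sdelta; rw [harc]; ring
  have hδ0 : 0 ≤ sdelta a := sdelta_nonneg ha0.le ha2'
  have hδ2 : sdelta a ≤ 2 := sdelta_le_two ha0.le ha2'
  have hδδ0 : 0 ≤ sdelta (sdelta a) := sdelta_nonneg hδ0 hδ2
  have hAeq : A = sdelta a + 2 * sdelta (sdelta a) := by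
    rw [hA]; unfold sdelta; ring
  have hk : (π / 2 - 1) / 2 < 0.2875 := by linarith
  have hk0 : (0:ℝ) ≤ (π / 2 - 1) / 2 := by nlinarith [Real.pi_gt_three]
  have e1 : sdelta a ≤ 0.2875 * a := by
    refine le_trans (sdelta_le_lin ha0.le ha2') ?_
    exact mul_le_mul_of_nonneg_right hk.le ha0.le
  have e2 : sdelta (sdelta a) ≤ 0.2875 * sdelta a := by
    refine le_trans (sdelta_le_lin hδ0 hδ2) ?_
    exact mul_le_mul_of_nonneg_right hk.le hδ0
  have hkey : 4 * sdelta (sdelta a) < a := by linarith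
  have hA0 : 0 ≤ A := by rw [hAeq]; linarith
  have hsmall : sdelta (sdelta a) < 0.005 := by
    rcases lt_or_eq_of_le ha2' with h | h
    · have := sdd_strictMono ⟨ha0.le, ha2'⟩ ⟨by norm_num, le_refl 2⟩ h
      exact lt_trans this sdd_two_lt
    · rw [h]; exact sdd_two_lt
  refine ⟨by linarith [hβeq, hAeq], ?_, by rw [hβeq, hAeq]; ring, by linarith,
    sdd_strictMono, sdd_two_lt⟩
  intro t ht1 ht2
  have ht0 : 0 ≤ t := le_trans hA0 ht1
  have htβ : t ≤ β := by linarith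
  have hdu : arcDist (u + t) u = t := by
    have he : |(u + t) - u| = t := by
      rw [show (u + t) - u = t by ring, abs_of_nonneg ht0]
    rw [arcDist_eq_abs (by rw [he]; linarith), he]
  have hdv : arcDist (u + t) (u + β) = β - t := by
    have he : |(u + t) - (u + β)| = β - t := by
      rw [show (u + t) - (u + β) = -(β - t) by ring, abs_neg,
        abs_of_nonneg (by linarith)]
    rw [arcDist_eq_abs (by rw [he]; linarith), he]
  have hca : chordLen u (u + β) = a := ha.symm
  have harcA : Real.arcsin (sdelta a / 2) = A / 2 := by rw [hA]; ring
  have hsinmem : ∀ x : ℝ, A ≤ x → x ≤ β → sdelta a / 2 ≤ Real.sin (x / 2) := by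
    intro x hx1 hx2
    have hmem1 : A / 2 ∈ Set.Icc (-(π / 2)) (π / 2) := by
      constructor
      · linarith
      · rw [← harcA]; exact Real.arcsin_le_pi_div_two _
    have hmem2 : x / 2 ∈ Set.Icc (-(π / 2)) (π / 2) := ⟨by linarith, by linarith⟩
    have hmono := Real.strictMonoOn_sin.monotoneOn hmem1 hmem2 (by linarith : A / 2 ≤ x / 2)
    rw [← harcA, Real.sin_arcsin (by linarith) (by linarith)] at hmono
    exact hmono
  refine ⟨⟨t, ?_, ?_, ?_⟩, ?_, ?_⟩
  · rw [hca]; linarith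
  · rw [hca]; linarith
  · have he : |(u + t) - (u + t)| = 0 := by simp
    rw [arcDist_eq_abs (by rw [he]; linarith), he]
  · intro _
    rw [hdv]
    have hcu : chordLen (u + t) u = 2 * Real.sin (t / 2) := by
      unfold chordLen; rw [hdu]
    rw [hcu, hca]
    have := hsinmem t ht1 htβ
    linarith
  · intro _
    rw [hdu]
    have hcv : chordLen (u + t) (u + β) = 2 * Real.sin ((β - t) / 2) := by
      unfold chordLen; rw [hdv]
    rw [hcv, hca]
    have := hsinmem (β - t) (by linarith) (by linarith)
    linarith
end
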